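/- (Theorem 4.2, first part) Let X₁, X₂, … be an infinite sequence of independent random points, each uniformly distributed on the unit sphere S² ⊂ ℝ³. Fix c > 0 and α ∈ (0,1), and for each N with c/N^α < 1 set p_N = c/N^α and a_N = 2·arcsin(√p_N). Let |𝓔_N| be the number of edges of the random intersection graph G_N on vertex set {1,…,N} built from X₁,…,X_N with caps of angular radius a_N. Then almost surely, for all sufficiently large N, 2·|𝓔_N| ≥ N, i.e., G_N has at least N/2 edges. -/

import Mathlib

open MeasureTheory Real Set
open scoped ENNReal RealInnerProductSpace

/-- The unit sphere `S²` in `ℝ³`. -/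
noncomputable def S2 : Set (EuclideanSpace ℝ (Fin 3)) :=
  Metric.sphere (0 : EuclideanSpace ℝ (Fin 3)) 1

/-- The uniform probability measure on the unit sphere `S² ⊂ ℝ³`: the rotation-invariant
surface (2-dimensional Hausdorff) measure restricted to the sphere, normalized by the total
surface area `4π`. -/
noncomputable def sphereUniform : Measure (EuclideanSpace ℝ (Fin 3)) :=
  (ENNReal.ofReal (4 * π))⁻¹ •
    (μH[2] : Measure (EuclideanSpace ℝ (Fin 3))).restrict S2

/-- The angular distance `θ(x,y) = arccos ⟪x,y⟫` between two points of the sphere. -/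
noncomputable def angDist (x y : EuclideanSpace ℝ (Fin 3)) : ℝ :=
  Real.arccos ⟪x, y⟫


open Metric

local notation "E3" => EuclideanSpace ℝ (Fin 3)


lemma packing_bound {s : ℝ} (hs : 0 < s) (hs1 : s ≤ 1) (T : Finset E3)
    (hT : ↑T ⊆ S2) (hsep : ∀ x ∈ T, ∀ y ∈ T, x ≠ y → s < dist x y) :
    (T.card : ℝ) ≤ 32 / s ^ 2 := by
  set u := s / 2 with hu
  have hu0 : 0 < u := by positivity
  have hv0 : volume (ball (0:E3) 1) ≠ 0 := (measure_ball_pos _ _ one_pos).ne'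
  have hvt : volume (ball (0:E3) 1) ≠ ⊤ := measure_ball_lt_top.ne
  have hdisj : (↑T : Set E3).PairwiseDisjoint fun y => closedBall y u := by
    intro x hx y hy hxy
    exact closedBall_disjoint_closedBall (by rw [hu]; linarith [hsep x hx y hy hxy])
  have hsub : (⋃ y ∈ T, closedBall y u) ⊆ closedBall (0:E3) (1+u) \ ball (0:E3) (1-u) := by
    intro z hz
    simp only [Set.mem_iUnion] at hz
    obtain ⟨y, hy, hzy⟩ := hz
    have hyn : dist y (0:E3) = 1 := mem_sphere.mp (hT hy)
    have h1 : dist z (0:E3) ≤ 1 + u := by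
      calc dist z 0 ≤ dist z y + dist y 0 := dist_triangle _ _ _
      _ ≤ u + 1 := by have := mem_closedBall.mp hzy; linarith
      _ = 1 + u := by ring
    have h2 : 1 - u ≤ dist z (0:E3) := by
      have := dist_triangle y z (0:E3)
      have h3 : dist y z ≤ u := by rw [dist_comm]; exact mem_closedBall.mp hzy
      linarith
    exact ⟨mem_closedBall.mp h1, fun h => absurd (mem_ball.mp h) (not_lt.mpr h2)⟩
  have hsum : volume (⋃ y ∈ T, closedBall y u)
      = T.card * (ENNReal.ofReal (u ^ 3) * volume (ball (0:E3) 1)) := by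
    rw [measure_biUnion_finset hdisj (fun y _ => measurableSet_closedBall)]
    rw [Finset.sum_congr rfl (fun y _ => by
      rw [Measure.addHaar_closedBall volume y hu0.le, finrank_euclideanSpace_fin])]
    simp [Finset.sum_const, nsmul_eq_mul]
  have hshell : volume (closedBall (0:E3) (1+u) \ ball (0:E3) (1-u))
      ≤ ENNReal.ofReal (8 * u) * volume (ball (0:E3) 1) := by
    rw [measure_diff (ball_subset_closedBall.trans (closedBall_subset_closedBall (by linarith)))
      measurableSet_ball.nullMeasurableSet measure_ball_lt_top.ne]
    rw [Measure.addHaar_closedBall volume _ (by linarith : (0:ℝ) ≤ 1+u),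
      Measure.addHaar_ball volume _ (by linarith : (0:ℝ) ≤ 1-u), finrank_euclideanSpace_fin]
    rw [← ENNReal.sub_mul (fun _ _ => hvt)]
    refine mul_le_mul_left ?_ _
    rw [← ENNReal.ofReal_sub _ (pow_nonneg (by rw [hu]; linarith) 3)]
    apply ENNReal.ofReal_le_ofReal
    nlinarith [hu0.le, sq_nonneg u, hs1]
  have key : (T.card : ℝ≥0∞) * ENNReal.ofReal (u ^ 3) ≤ ENNReal.ofReal (8 * u) := by
    have := (hsum ▸ measure_mono hsub).trans hshell
    rw [← mul_assoc] at this
    exact (ENNReal.mul_le_mul_iff_left hv0 hvt).mp this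
  have key2 : (T.card : ℝ) * u ^ 3 ≤ 8 * u := by
    rw [← ENNReal.ofReal_natCast, ← ENNReal.ofReal_mul (by positivity)] at key
    exact (ENNReal.ofReal_le_ofReal_iff (by positivity)).mp key
  calc (T.card : ℝ) ≤ 8 * u / u ^ 3 := (le_div_iff₀ (pow_pos hu0 3)).mpr key2
    _ = 32 / s ^ 2 := by rw [hu]; field_simp; ring

lemma sphereUniform_ball_congr {y z : E3} (hy : y ∈ S2) (hz : z ∈ S2) (s : ℝ) :
    sphereUniform (closedBall y s) = sphereUniform (closedBall z s) := by
  have hnorm : ‖y‖ = ‖z‖ := by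
    have hy' := mem_sphere_zero_iff_norm.mp hy
    have hz' := mem_sphere_zero_iff_norm.mp hz
    rw [hy', hz']
  set f := Submodule.reflection (ℝ ∙ (y - z))ᗮ with hf
  have hfy : f y = z := Submodule.reflection_sub hnorm
  have hiso : Isometry f := f.isometry
  have himg : f '' (closedBall y s ∩ S2) = closedBall z s ∩ S2 := by
    rw [Set.image_inter f.injective]
    congr 1
    · rw [show (f '' closedBall y s) = closedBall (f y) s from f.image_closedBall y s, hfy]
    · show f '' S2 = S2
      rw [show (f '' S2) = Metric.sphere (f 0) 1 from f.image_sphere 0 1, map_zero]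
      rfl
  have hS2 : MeasurableSet S2 := Metric.isClosed_sphere.measurableSet
  simp only [sphereUniform, Measure.smul_apply,
    Measure.restrict_apply measurableSet_closedBall]
  rw [← himg, hiso.hausdorffMeasure_image (Or.inl (by norm_num))]

lemma sphere_cover {s : ℝ} (hs : 0 < s) (hs1 : s ≤ 1) :
    ∃ T : Finset E3, ↑T ⊆ S2 ∧ (∀ x ∈ S2, ∃ y ∈ T, dist x y ≤ s) ∧
      (T.card : ℝ) ≤ 32 / s ^ 2 := by
  classical
  set A : Set ℕ := {n | ∃ T : Finset E3, ↑T ⊆ S2 ∧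
    (∀ x ∈ T, ∀ y ∈ T, x ≠ y → s < dist x y) ∧ T.card = n} with hA
  have h0 : 0 ∈ A := ⟨∅, by simp⟩
  have hcard : ∀ n ∈ A, (n : ℝ) ≤ 32 / s ^ 2 := by
    rintro n ⟨T, hT1, hT2, rfl⟩
    exact packing_bound hs hs1 T hT1 hT2
  have hbdd : BddAbove A := by
    refine ⟨Nat.ceil (32 / s ^ 2), fun n hn => ?_⟩
    exact Nat.cast_le.mp ((hcard n hn).trans (Nat.le_ceil _))
  have hmem := Nat.sSup_mem ⟨0, h0⟩ hbdd
  obtain ⟨T, hT1, hT2, hTcard⟩ := hmem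
  refine ⟨T, hT1, ?_, hTcard ▸ hcard _ ⟨T, hT1, hT2, hTcard⟩⟩
  intro x hx
  by_contra hcov
  push_neg at hcov
  have hxT : x ∉ T := fun hxT => by
    have := hcov x hxT
    simp at this
    linarith
  have hnew : T.card + 1 ∈ A := by
    refine ⟨insert x T, ?_, ?_, by rw [Finset.card_insert_of_notMem hxT]⟩
    · intro z hz
      rcases Finset.mem_insert.mp hz with rfl | hz
      · exact hx
      · exact hT1 hz
    · intro a ha b hb hab
      rcases Finset.mem_insert.mp ha with ha' | ha' <;>
        rcases Finset.mem_insert.mp hb with hb' | hb'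
      · exact absurd (ha'.trans hb'.symm) hab
      · subst ha'; exact hcov b hb'
      · subst hb'; rw [dist_comm]; exact hcov a ha'
      · exact hT2 a ha' b hb' hab
  have := le_csSup hbdd hnew
  rw [hTcard] at this
  omega

lemma cap_lower_bound (hprob : sphereUniform S2 = 1) {s : ℝ} (hs : 0 < s) (hs1 : s ≤ 1)
    {y : E3} (hy : y ∈ S2) :
    ENNReal.ofReal (s ^ 2 / 32) ≤ sphereUniform (closedBall y s) := by
  obtain ⟨T, hT1, hT2, hT3⟩ := sphere_cover hs hs1
  set m := sphereUniform (closedBall y s) with hm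
  have hone : (1 : ℝ≥0∞) ≤ T.card * m := by
    calc (1 : ℝ≥0∞) = sphereUniform S2 := hprob.symm
    _ ≤ sphereUniform (⋃ z ∈ T, closedBall z s) := by
        apply measure_mono
        intro x hx
        obtain ⟨z, hz, hdz⟩ := hT2 x hx
        exact Set.mem_biUnion hz (mem_closedBall.mpr hdz)
    _ ≤ ∑ z ∈ T, sphereUniform (closedBall z s) := measure_biUnion_finset_le _ _
    _ = T.card * m := by
        rw [Finset.sum_congr rfl (fun z hz => sphereUniform_ball_congr (hT1 hz) hy s)]
        simp [Finset.sum_const, nsmul_eq_mul, hm]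
  have hfac : ENNReal.ofReal (s ^ 2 / 32) * T.card ≤ 1 := by
    rw [← ENNReal.ofReal_natCast T.card, ← ENNReal.ofReal_mul (by positivity)]
    refine ENNReal.ofReal_le_one.mpr ?_
    have h1 : s ^ 2 / 32 * T.card ≤ s ^ 2 / 32 * (32 / s ^ 2) :=
      mul_le_mul_of_nonneg_left hT3 (by positivity)
    have h2 : s ^ 2 / 32 * (32 / s ^ 2) = 1 := by field_simp
    linarith
  calc ENNReal.ofReal (s ^ 2 / 32) = ENNReal.ofReal (s ^ 2 / 32) * 1 := (mul_one _).symm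
  _ ≤ ENNReal.ofReal (s ^ 2 / 32) * (T.card * m) := mul_le_mul_right hone _
  _ = ENNReal.ofReal (s ^ 2 / 32) * T.card * m := (mul_assoc _ _ _).symm
  _ ≤ 1 * m := mul_le_mul_left hfac m
  _ = m := one_mul m

lemma angDist_le_of_dist_le {x y : E3} (hx : x ∈ S2) (hy : y ∈ S2) {a : ℝ}
    (ha0 : 0 ≤ a) (haπ : 2 * a ≤ π) (hd : dist x y ≤ 2 * Real.sin a) :
    Real.arccos ⟪x, y⟫ ≤ 2 * a := by
  have hxn : ‖x‖ = 1 := mem_sphere_zero_iff_norm.mp hx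
  have hyn : ‖y‖ = 1 := mem_sphere_zero_iff_norm.mp hy
  have hsin0 : 0 ≤ Real.sin a := Real.sin_nonneg_of_nonneg_of_le_pi ha0 (by linarith [Real.pi_pos])
  have hd2 : ‖x - y‖ ^ 2 ≤ (2 * Real.sin a) ^ 2 := by
    rw [← dist_eq_norm]
    exact pow_le_pow_left₀ dist_nonneg hd 2
  have hinner : Real.cos (2 * a) ≤ ⟪x, y⟫ := by
    have hexp : ‖x - y‖ ^ 2 = 2 - 2 * ⟪x, y⟫ := by
      rw [norm_sub_sq_real, hxn, hyn]; ring
    have hcos : Real.cos (2 * a) = 1 - 2 * Real.sin a ^ 2 := by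
      rw [Real.cos_two_mul', Real.cos_sq']; ring
    nlinarith
  have hmono : Real.arccos ⟪x, y⟫ ≤ Real.arccos (Real.cos (2 * a)) := by
    unfold Real.arccos
    have : Real.arcsin (Real.cos (2 * a)) ≤ Real.arcsin ⟪x, y⟫ :=
      Real.monotone_arcsin hinner
    linarith
  rwa [Real.arccos_cos (by linarith) haπ] at hmono

lemma param_facts {p : ℝ} (hp0 : 0 < p) (hp : p ≤ 1/2) :
    0 < Real.sin (2 * Real.arcsin (Real.sqrt p)) ∧
    Real.sin (2 * Real.arcsin (Real.sqrt p)) ≤ 1 ∧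
    p ≤ Real.sin (2 * Real.arcsin (Real.sqrt p)) ^ 2 ∧
    0 ≤ 2 * Real.arcsin (Real.sqrt p) ∧
    2 * (2 * Real.arcsin (Real.sqrt p)) ≤ π := by
  have hp1 : p ≤ 1 := by linarith
  have hsle : Real.sqrt p ≤ 1 := by
    rw [show (1:ℝ) = Real.sqrt 1 from (Real.sqrt_one).symm]
    exact Real.sqrt_le_sqrt hp1
  have hs : Real.sin (2 * Real.arcsin (Real.sqrt p))
      = 2 * Real.sqrt p * Real.sqrt (1 - p) := by
    rw [Real.sin_two_mul, Real.sin_arcsin (by linarith [Real.sqrt_nonneg p] : (-1:ℝ) ≤ Real.sqrt p) hsle,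
      Real.cos_arcsin, Real.sq_sqrt hp0.le]
  have h1p : (0:ℝ) < 1 - p := by linarith
  have hspos : 0 < Real.sin (2 * Real.arcsin (Real.sqrt p)) := by
    rw [hs]; positivity
  refine ⟨hspos, Real.sin_le_one _, ?_, ?_, ?_⟩
  · rw [hs]
    have e1 : (2 * Real.sqrt p * Real.sqrt (1 - p)) ^ 2 = 4 * p * (1 - p) := by
      rw [mul_pow, mul_pow, Real.sq_sqrt hp0.le, Real.sq_sqrt h1p.le]; norm_num
    rw [e1]; nlinarith
  · have := Real.arcsin_nonneg.mpr (Real.sqrt_nonneg p)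
    linarith
  · have hhalf : Real.sqrt p ≤ Real.sin (π/4) := by
      rw [Real.sin_pi_div_four]
      have h2 : Real.sqrt p ≤ Real.sqrt (1/2) := Real.sqrt_le_sqrt hp
      have h22 : Real.sqrt 2 * Real.sqrt 2 = 2 := Real.mul_self_sqrt (by norm_num)
      have hne : (0:ℝ) < Real.sqrt 2 := Real.sqrt_pos.mpr (by norm_num)
      have h3 : Real.sqrt (1/2) = Real.sqrt 2 / 2 := by
        rw [one_div, Real.sqrt_inv, eq_div_iff (by norm_num : (2:ℝ) ≠ 0),
          inv_mul_eq_div, div_eq_iff hne.ne']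
        linarith
      linarith [h3 ▸ h2]
    have harc : Real.arcsin (Real.sqrt p) ≤ π/4 := by
      have := Real.monotone_arcsin hhalf
      rwa [Real.arcsin_sin (by linarith [Real.pi_pos]) (by linarith [Real.pi_pos])] at this
    linarith

lemma avoid_prob {Ω : Type*} [MeasurableSpace Ω] (P : Measure Ω) [IsProbabilityMeasure P]
    (X : ℕ → Ω → E3) (hmeas : ∀ i, Measurable (X i))
    (hindep : ProbabilityTheory.iIndepFun X P)
    (hdist : ∀ i, Measure.map (X i) P = sphereUniform)
    {C : Set E3} (hC : MeasurableSet C) {lb : ℝ≥0∞} (hlb : lb ≤ sphereUniform C)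
    (S : Finset ℕ) :
    P (⋂ j ∈ S, X j ⁻¹' Cᶜ) ≤ (1 - lb) ^ S.card := by
  haveI : IsProbabilityMeasure sphereUniform :=
    hdist 0 ▸ Measure.isProbabilityMeasure_map (hmeas 0).aemeasurable
  have heq := hindep.measure_inter_preimage_eq_mul S (sets := fun _ => Cᶜ)
    (fun i _ => hC.compl)
  rw [heq]
  have hterm : ∀ j ∈ S, P (X j ⁻¹' Cᶜ) ≤ 1 - lb := by
    intro j _
    rw [← Measure.map_apply (hmeas j) hC.compl, hdist j]
    calc sphereUniform Cᶜ = 1 - sphereUniform C := by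
          rw [measure_compl hC (measure_ne_top _ _), measure_univ]
    _ ≤ 1 - lb := tsub_le_tsub_left hlb 1
  calc ∏ j ∈ S, P (X j ⁻¹' Cᶜ) ≤ ∏ _j ∈ S, (1 - lb) := Finset.prod_le_prod' hterm
  _ = (1 - lb) ^ S.card := Finset.prod_const _

lemma summable_G {c α : ℝ} (hc : 0 < c) (hα0 : 0 < α) (hα1 : α < 1) :
    Summable (fun N : ℕ =>
      32 / c * (N:ℝ) ^ α * N * Real.exp (-(c / (N:ℝ) ^ α / 32) * ((N:ℝ) - 1))) := by
  set β := 1 - α with hβ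
  have hβ0 : 0 < β := by rw [hβ]; linarith
  set G : ℕ → ℝ := fun N =>
    32 / c * (N:ℝ) ^ α * N * Real.exp (-(c / (N:ℝ) ^ α / 32) * ((N:ℝ) - 1)) with hG
  set H : ℝ → ℝ := fun x => 32 / c * (x ^ (α + 3) * Real.exp (-(c / 64) * x ^ β)) with hH
  have hHtend : Filter.Tendsto H Filter.atTop (nhds 0) := by
    have h1 : Filter.Tendsto (fun x : ℝ => x ^ ((α + 3) / β) * Real.exp (-(c / 64) * x))
        Filter.atTop (nhds 0) :=
      tendsto_rpow_mul_exp_neg_mul_atTop_nhds_zero _ _ (by positivity)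
    have h2 : Filter.Tendsto (fun x : ℝ => x ^ β) Filter.atTop Filter.atTop :=
      tendsto_rpow_atTop hβ0
    have h3 := h1.comp h2
    have h4 : Filter.Tendsto (fun x : ℝ => x ^ (α + 3) * Real.exp (-(c / 64) * x ^ β))
        Filter.atTop (nhds 0) := by
      refine h3.congr' ?_
      filter_upwards [Filter.eventually_ge_atTop (0:ℝ)] with x hx
      simp only [Function.comp]
      rw [← Real.rpow_mul hx, show β * ((α + 3) / β) = α + 3 by field_simp]
    have := h4.const_mul (32 / c)
    simpa [hH, mul_zero] using this
  -- transfer to ℕ and compare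
  have hHnat : Filter.Tendsto (fun N : ℕ => H (N : ℝ)) Filter.atTop (nhds 0) :=
    hHtend.comp tendsto_natCast_atTop_atTop
  have hev : ∀ᶠ N : ℕ in Filter.atTop, H (N : ℝ) < 1 :=
    hHnat.eventually_lt_const (by norm_num)
  have hcomp : ∀ᶠ N : ℕ in Filter.atTop, ‖G N‖ ≤ 1 * ‖1 / (N : ℝ) ^ 2‖ := by
    filter_upwards [hev, Filter.eventually_ge_atTop 2] with N hHN hN2
    have hx2 : (2 : ℝ) ≤ (N : ℝ) := by exact_mod_cast hN2
    have hx0 : (0 : ℝ) < (N : ℝ) := by linarith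
    have hG0 : 0 ≤ G N := by
      have : (0:ℝ) ≤ (N:ℝ) ^ α := Real.rpow_nonneg hx0.le α
      positivity
    have hkey : (N : ℝ) ^ 2 * G N ≤ H (N : ℝ) := by
      have hexp : Real.exp (-(c / (N:ℝ) ^ α / 32) * ((N:ℝ) - 1))
          ≤ Real.exp (-(c / 64) * (N:ℝ) ^ β) := by
        apply Real.exp_le_exp.mpr
        have hpow : (N:ℝ) ^ β * (N:ℝ) ^ α = (N:ℝ) := by
          rw [← Real.rpow_add hx0, hβ]; norm_num
        have hN1 : (N:ℝ) ^ β ≤ 2 * ((N:ℝ) - 1) / (N:ℝ) ^ α := by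
          rw [le_div_iff₀ (Real.rpow_pos_of_pos hx0 α), hpow]
          linarith
        have hα' : 0 < (N:ℝ) ^ α := Real.rpow_pos_of_pos hx0 α
        rw [neg_mul, neg_mul, neg_le_neg_iff]
        calc c / 64 * (N:ℝ) ^ β ≤ c / 64 * (2 * ((N:ℝ) - 1) / (N:ℝ) ^ α) := by
              apply mul_le_mul_of_nonneg_left _ (by positivity)
              rw [le_div_iff₀ hα']; linarith
        _ = c / (N:ℝ) ^ α / 32 * ((N:ℝ) - 1) := by field_simp; ring
      have hpow3 : (N:ℝ) ^ (α + 3) = (N:ℝ) ^ α * (N:ℝ) ^ 3 := by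
        rw [Real.rpow_add hx0]
        norm_cast
      calc (N : ℝ) ^ 2 * G N
          = 32 / c * ((N:ℝ) ^ α * (N:ℝ) ^ 3) * Real.exp (-(c / (N:ℝ) ^ α / 32) * ((N:ℝ) - 1)) := by
            rw [hG]; ring
      _ ≤ 32 / c * ((N:ℝ) ^ α * (N:ℝ) ^ 3) * Real.exp (-(c / 64) * (N:ℝ) ^ β) := by
            apply mul_le_mul_of_nonneg_left hexp
            have : (0:ℝ) ≤ (N:ℝ) ^ α := Real.rpow_nonneg hx0.le α
            positivity
      _ = H (N : ℝ) := by simp only [hH]; rw [hpow3]; ring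
    rw [Real.norm_of_nonneg hG0, one_mul, Real.norm_of_nonneg (by positivity),
      le_div_iff₀ (by positivity : (0:ℝ) < (N:ℝ) ^ 2)]
    nlinarith [hkey, hHN]
  exact summable_of_isBigO_nat (summable_one_div_nat_pow.mpr one_lt_two)
    (Asymptotics.IsBigO.of_bound 1 hcomp)

/-- Theorem 4.2 (first part): for `c > 0` and `0 < α < 1`, with `p_N = c/N^α` and cap radius
`a_N = 2·arcsin √p_N`, almost surely, for all sufficiently large `N`, the random
intersection graph `G_N` has at least `N/2` edges, i.e. `2·|𝓔_N| ≥ N`. -/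
theorem at_least_half_N_edges_eventually
    (c α : ℝ) (hc : 0 < c) (hα : α ∈ Set.Ioo (0 : ℝ) 1)
    {Ω : Type*} [MeasurableSpace Ω] (P : Measure Ω) [IsProbabilityMeasure P]
    (X : ℕ → Ω → EuclideanSpace ℝ (Fin 3))
    (hmeas : ∀ i, Measurable (X i))
    (hindep : ProbabilityTheory.iIndepFun X P)
    (hdist : ∀ i, Measure.map (X i) P = sphereUniform) :
    ∀ᵐ ω ∂P, ∀ᶠ N : ℕ in Filter.atTop,
      N ≤ 2 * Set.ncard {q : ℕ × ℕ | q.1 < q.2 ∧ q.2 < N ∧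
        angDist (X q.1 ω) (X q.2 ω) ≤
          2 * (2 * Real.arcsin (Real.sqrt (c / (N : ℝ) ^ α)))} := by
  classical
  obtain ⟨hα0, hα1⟩ := hα
  haveI : IsProbabilityMeasure sphereUniform :=
    hdist 0 ▸ Measure.isProbabilityMeasure_map (hmeas 0).aemeasurable
  have hS2meas : MeasurableSet S2 := Metric.isClosed_sphere.measurableSet
  have hprobS2 : sphereUniform S2 = 1 := by
    have h1 : sphereUniform Set.univ = 1 := measure_univ
    have h2 : sphereUniform Set.univ = sphereUniform S2 := by
      simp only [sphereUniform, Measure.smul_apply,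
        Measure.restrict_apply MeasurableSet.univ, Measure.restrict_apply hS2meas,
        Set.univ_inter, Set.inter_self]
    rw [← h2, h1]
  -- parameters
  set p : ℕ → ℝ := fun N => c / (N : ℝ) ^ α with hpdef
  set aa : ℕ → ℝ := fun N => 2 * Real.arcsin (Real.sqrt (p N)) with haadef
  set sN : ℕ → ℝ := fun N => Real.sin (aa N) with hsdef
  -- N₀
  obtain ⟨N₀, hN₀⟩ : ∃ N₀ : ℕ, ∀ N ≥ N₀, 2 ≤ N ∧ 0 < p N ∧ p N ≤ 1/2 := by
    have ht : Filter.Tendsto (fun N : ℕ => (N : ℝ) ^ α) Filter.atTop Filter.atTop :=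
      (tendsto_rpow_atTop hα0).comp tendsto_natCast_atTop_atTop
    have hev := (ht.eventually_ge_atTop (2 * c)).and (Filter.eventually_ge_atTop 2)
    obtain ⟨N₀, hN₀⟩ := Filter.eventually_atTop.mp hev
    refine ⟨N₀, fun N hN => ?_⟩
    obtain ⟨h1, h2⟩ := hN₀ N hN
    have hpos : (0:ℝ) < (N : ℝ) ^ α := lt_of_lt_of_le (by linarith) h1
    refine ⟨h2, div_pos hc hpos, ?_⟩
    rw [div_le_iff₀ hpos]
    linarith
  -- facts about parameters
  have hfacts : ∀ N, N₀ ≤ N → 0 < sN N ∧ sN N ≤ 1 ∧ p N ≤ sN N ^ 2 ∧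
      0 ≤ aa N ∧ 2 * aa N ≤ π := by
    intro N hN
    exact param_facts (hN₀ N hN).2.1 (hN₀ N hN).2.2
  -- covers
  have hcovex : ∀ N, ∃ T : Finset (EuclideanSpace ℝ (Fin 3)), N₀ ≤ N →
      (↑T ⊆ S2 ∧ (∀ x ∈ S2, ∃ y ∈ T, dist x y ≤ sN N) ∧
        (T.card : ℝ) ≤ 32 / sN N ^ 2) := by
    intro N
    by_cases h : N₀ ≤ N
    · obtain ⟨T, h1, h2, h3⟩ := sphere_cover (hfacts N h).1 (hfacts N h).2.1
      exact ⟨T, fun _ => ⟨h1, h2, h3⟩⟩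
    · exact ⟨∅, fun h' => absurd h' h⟩
  choose T hT using hcovex
  -- bad events
  set B : ℕ → Set Ω := fun N =>
    if N₀ ≤ N then
      ⋃ y ∈ T N, ⋃ j ∈ Finset.range N,
        ⋂ j' ∈ Finset.range N \ {j}, X j' ⁻¹' (Metric.closedBall y (sN N))ᶜ
    else ∅ with hBdef
  -- bound on bad event probability
  set G : ℕ → ℝ := fun N =>
    32 / c * (N : ℝ) ^ α * N * Real.exp (-(c / (N : ℝ) ^ α / 32) * ((N : ℝ) - 1)) with hGdef
  have hG0 : ∀ N, 0 ≤ G N := by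
    intro N
    have h1 : (0:ℝ) ≤ (N:ℝ) ^ α := Real.rpow_nonneg (Nat.cast_nonneg N) α
    have := Real.exp_pos (-(c / (N : ℝ) ^ α / 32) * ((N : ℝ) - 1))
    positivity
  have hPB : ∀ N, P (B N) ≤ ENNReal.ofReal (G N) := by
    intro N
    by_cases hN : N₀ ≤ N
    · obtain ⟨hT1, hT2, hT3⟩ := hT N hN
      obtain ⟨hs0, hs1, hps, ha0, haπ⟩ := hfacts N hN
      obtain ⟨hN2, hp0, hp12⟩ := hN₀ N hN
      have hcap : ∀ y ∈ T N, ENNReal.ofReal (p N / 32)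
          ≤ sphereUniform (Metric.closedBall y (sN N)) := by
        intro y hy
        refine le_trans (ENNReal.ofReal_le_ofReal (by linarith : p N / 32 ≤ sN N ^ 2 / 32))
          (cap_lower_bound hprobS2 hs0 hs1 (hT1 hy))
      have hEbound : ∀ y ∈ T N, ∀ j ∈ Finset.range N,
          P (⋂ j' ∈ Finset.range N \ {j}, X j' ⁻¹' (Metric.closedBall y (sN N))ᶜ)
            ≤ ENNReal.ofReal ((1 - p N / 32) ^ (N - 1)) := by
        intro y hy j hj
        have hcard : (Finset.range N \ {j}).card = N - 1 := by
          rw [Finset.card_sdiff_of_subset (Finset.singleton_subset_iff.mpr hj)]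
          simp
        calc P (⋂ j' ∈ Finset.range N \ {j}, X j' ⁻¹' (Metric.closedBall y (sN N))ᶜ)
            ≤ (1 - ENNReal.ofReal (p N / 32)) ^ (Finset.range N \ {j}).card :=
              avoid_prob P X hmeas hindep hdist measurableSet_closedBall (hcap y hy) _
        _ = ENNReal.ofReal (1 - p N / 32) ^ (N - 1) := by
              rw [hcard, ← ENNReal.ofReal_one, ← ENNReal.ofReal_sub _ (by positivity)]
        _ = ENNReal.ofReal ((1 - p N / 32) ^ (N - 1)) := by
              rw [ENNReal.ofReal_pow (by linarith)]
      have hB : B N = ⋃ y ∈ T N, ⋃ j ∈ Finset.range N,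
          ⋂ j' ∈ Finset.range N \ {j}, X j' ⁻¹' (Metric.closedBall y (sN N))ᶜ := by
        rw [hBdef]; exact if_pos hN
      calc P (B N) ≤ ∑ y ∈ T N, P (⋃ j ∈ Finset.range N,
              ⋂ j' ∈ Finset.range N \ {j}, X j' ⁻¹' (Metric.closedBall y (sN N))ᶜ) := by
            rw [hB]; exact measure_biUnion_finset_le _ _
      _ ≤ ∑ y ∈ T N, ∑ j ∈ Finset.range N,
              P (⋂ j' ∈ Finset.range N \ {j}, X j' ⁻¹' (Metric.closedBall y (sN N))ᶜ) :=
            Finset.sum_le_sum (fun y _ => measure_biUnion_finset_le _ _)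
      _ ≤ ∑ y ∈ T N, ∑ j ∈ Finset.range N, ENNReal.ofReal ((1 - p N / 32) ^ (N - 1)) :=
            Finset.sum_le_sum (fun y hy => Finset.sum_le_sum (fun j hj => hEbound y hy j hj))
      _ = (T N).card * (N * ENNReal.ofReal ((1 - p N / 32) ^ (N - 1))) := by
            simp [Finset.sum_const, nsmul_eq_mul, mul_assoc]
      _ ≤ ENNReal.ofReal (32 / p N) *
            (ENNReal.ofReal N * ENNReal.ofReal ((1 - p N / 32) ^ (N - 1))) := by
            refine mul_le_mul' ?_ (mul_le_mul' (by rw [ENNReal.ofReal_natCast]) le_rfl)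
            rw [← ENNReal.ofReal_natCast]
            refine ENNReal.ofReal_le_ofReal (hT3.trans ?_)
            refine div_le_div_of_nonneg_left (by norm_num) (by positivity) hps
      _ = ENNReal.ofReal (32 / p N * ((N : ℝ) * (1 - p N / 32) ^ (N - 1))) := by
            rw [ENNReal.ofReal_mul (by positivity), ENNReal.ofReal_mul (by positivity)]
      _ ≤ ENNReal.ofReal (G N) := by
            refine ENNReal.ofReal_le_ofReal ?_
            have hpow : (1 - p N / 32) ^ (N - 1)
                ≤ Real.exp (-(p N / 32) * ((N : ℝ) - 1)) := by
              have h1 : 1 - p N / 32 ≤ Real.exp (-(p N / 32)) := by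
                have := Real.add_one_le_exp (-(p N / 32))
                linarith
              calc (1 - p N / 32) ^ (N - 1) ≤ Real.exp (-(p N / 32)) ^ (N - 1) :=
                    pow_le_pow_left₀ (by linarith) h1 _
              _ = Real.exp (-(p N / 32) * (N - 1 : ℕ)) := by
                    rw [← Real.exp_nat_mul]; ring_nf
              _ ≤ Real.exp (-(p N / 32) * ((N : ℝ) - 1)) := by
                    refine Real.exp_le_exp.mpr ?_
                    have hc1 : ((N - 1 : ℕ) : ℝ) = (N : ℝ) - 1 := by
                      have : 1 ≤ N := by omega
                      push_cast [this]; ring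
                    rw [hc1]
            have hNα : (0:ℝ) < (N : ℝ) ^ α := by
              have : (0:ℝ) < (N:ℝ) := by exact_mod_cast (by omega : 0 < N)
              exact Real.rpow_pos_of_pos this α
            have heq : 32 / p N = 32 / c * (N : ℝ) ^ α := by
              rw [hpdef]
              field_simp
            have heq2 : -(p N / 32) * ((N : ℝ) - 1) = -(c / (N : ℝ) ^ α / 32) * ((N : ℝ) - 1) := by
              rw [hpdef]
            calc 32 / p N * ((N : ℝ) * (1 - p N / 32) ^ (N - 1))
                ≤ 32 / p N * ((N : ℝ) * Real.exp (-(p N / 32) * ((N : ℝ) - 1))) := by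
                  refine mul_le_mul_of_nonneg_left ?_ (by positivity)
                  exact mul_le_mul_of_nonneg_left hpow (Nat.cast_nonneg N)
            _ = G N := by rw [hGdef, heq, heq2]; ring
    · simp only [hBdef, if_neg hN]
      simp [hG0 N]
  -- Borel–Cantelli
  have hsum : Summable G := summable_G hc hα0 hα1
  have htsum : (∑' N, P (B N)) ≠ ⊤ := by
    refine ne_top_of_le_ne_top ?_ (ENNReal.tsum_le_tsum hPB)
    rw [← ENNReal.ofReal_tsum_of_nonneg hG0 hsum]
    exact ENNReal.ofReal_ne_top
  have hBC : ∀ᵐ ω ∂P, ∀ᶠ N in Filter.atTop, ω ∉ B N := ae_eventually_notMem htsum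
  have hsph : ∀ᵐ ω ∂P, ∀ j, X j ω ∈ S2 := by
    rw [MeasureTheory.ae_all_iff]
    intro j
    have hkey : P (X j ⁻¹' S2ᶜ) = 0 := by
      rw [← Measure.map_apply (hmeas j) hS2meas.compl, hdist j,
        measure_compl hS2meas (measure_ne_top _ _), hprobS2, measure_univ, tsub_self]
    have : {ω | ¬ X j ω ∈ S2} = X j ⁻¹' S2ᶜ := rfl
    rw [MeasureTheory.ae_iff, this, hkey]
  filter_upwards [hBC, hsph] with ω hω hωS
  obtain ⟨N₁, hN₁⟩ := Filter.eventually_atTop.mp hω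
  rw [Filter.eventually_atTop]
  refine ⟨max N₁ N₀, fun N hN => ?_⟩
  have hNN₀ : N₀ ≤ N := le_trans (le_max_right _ _) hN
  have hNN₁ : N₁ ≤ N := le_trans (le_max_left _ _) hN
  obtain ⟨hT1, hT2, hT3⟩ := hT N hNN₀
  obtain ⟨hs0, hs1, hps, ha0, haπ⟩ := hfacts N hNN₀
  have hωB := hN₁ N hNN₁
  simp only [hBdef, if_pos hNN₀] at hωB
  set th : ℝ := 2 * (2 * Real.arcsin (Real.sqrt (c / (N : ℝ) ^ α))) with hthdef
  have hth : 2 * aa N = th := by rw [hthdef, haadef, hpdef]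
  have hsymm : ∀ x y : EuclideanSpace ℝ (Fin 3), angDist x y = angDist y x := by
    intro x y; unfold angDist; rw [real_inner_comm]
  -- neighbor property
  have hnb : ∀ i, i < N → ∃ j, j < N ∧ j ≠ i ∧ angDist (X i ω) (X j ω) ≤ th := by
    intro i hi
    obtain ⟨y, hyT, hyd⟩ := hT2 (X i ω) (hωS i)
    have hmem : ∃ j' ∈ Finset.range N \ {i}, X j' ω ∈ Metric.closedBall y (sN N) := by
      by_contra hcon
      push_neg at hcon
      apply hωB
      refine Set.mem_biUnion hyT ?_
      refine Set.mem_biUnion (Finset.mem_range.mpr hi) ?_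
      rw [Set.mem_iInter₂]
      intro j' hj'
      exact hcon j' hj'
    obtain ⟨j', hj'mem, hj'ball⟩ := hmem
    rw [Finset.mem_sdiff, Finset.mem_range, Finset.mem_singleton] at hj'mem
    refine ⟨j', hj'mem.1, hj'mem.2, ?_⟩
    have hd : dist (X i ω) (X j' ω) ≤ 2 * sN N := by
      calc dist (X i ω) (X j' ω) ≤ dist (X i ω) y + dist y (X j' ω) := dist_triangle _ _ _
      _ ≤ sN N + sN N := add_le_add hyd
            (by rw [dist_comm]; exact Metric.mem_closedBall.mp hj'ball)
      _ = 2 * sN N := by ring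
    have hang := angDist_le_of_dist_le (hωS i) (hωS j') ha0 haπ hd
    rw [← hth]
    exact hang
  -- counting
  set F : Finset (ℕ × ℕ) := (Finset.range N ×ˢ Finset.range N).filter
    (fun q => q.1 < q.2 ∧ q.2 < N ∧ angDist (X q.1 ω) (X q.2 ω) ≤ th) with hFdef
  have hset : {q : ℕ × ℕ | q.1 < q.2 ∧ q.2 < N ∧ angDist (X q.1 ω) (X q.2 ω) ≤ th} = ↑F := by
    ext q
    simp only [hFdef, Finset.coe_filter, Finset.mem_product, Finset.mem_range,
      Set.mem_setOf_eq]
    constructor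
    · rintro ⟨h1, h2, h3⟩; exact ⟨⟨lt_trans h1 h2, h2⟩, h1, h2, h3⟩
    · rintro ⟨-, h⟩; exact h
  rw [hset, Set.ncard_coe_finset]
  choose! nb hnb1 hnb2 hnb3 using hnb
  set g : ℕ → ℕ × ℕ := fun i => if i < nb i then (i, nb i) else (nb i, i) with hgdef
  have hmaps : ∀ i ∈ Finset.range N, g i ∈ F := by
    intro i hi
    rw [Finset.mem_range] at hi
    rw [hFdef, Finset.mem_filter, Finset.mem_product]
    by_cases h : i < nb i
    · simp only [hgdef, if_pos h]
      exact ⟨⟨Finset.mem_range.mpr hi, Finset.mem_range.mpr (hnb1 i hi)⟩,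
        h, hnb1 i hi, hnb3 i hi⟩
    · have hlt : nb i < i := lt_of_le_of_ne (not_lt.mp h) (hnb2 i hi)
      simp only [hgdef, if_neg h]
      exact ⟨⟨Finset.mem_range.mpr (hnb1 i hi), Finset.mem_range.mpr hi⟩,
        hlt, hi, (hsymm _ _) ▸ hnb3 i hi⟩
  have hfib : ∀ q ∈ F, (Finset.filter (fun i => g i = q) (Finset.range N)).card ≤ 2 := by
    intro q hq
    have hsub : Finset.filter (fun i => g i = q) (Finset.range N) ⊆ {q.1, q.2} := by
      intro i hi
      rw [Finset.mem_filter] at hi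
      obtain ⟨-, hgi⟩ := hi
      rw [Finset.mem_insert, Finset.mem_singleton]
      by_cases h : i < nb i
      · left; rw [← hgi]; simp only [hgdef, if_pos h]
      · right; rw [← hgi]; simp only [hgdef, if_neg h]
    calc (Finset.filter (fun i => g i = q) (Finset.range N)).card
        ≤ ({q.1, q.2} : Finset ℕ).card := Finset.card_le_card hsub
    _ ≤ 2 := by
        refine le_trans (Finset.card_insert_le _ _) ?_
        simp
  have hcount := Finset.card_le_mul_card_image_of_maps_to hmaps 2 hfib
  rw [Finset.card_range] at hcount
  exact hcount
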